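/- Let R be a commutative ring and ρ : R^n → R^n an R-module endomorphism of the free module R^n. If ρ is injective, then det(ρ) is not a zero divisor in R. -/

import Mathlib

lemma snoc_injective_of_not_mem_range {m : ℕ} {α : Type*} {f : Fin m → α} {a : α}
    (hf : Function.Injective f) (ha : a ∉ Set.range f) :
    Function.Injective (Fin.snoc f a : Fin (m + 1) → α) := by
  intro i j h
  induction i using Fin.lastCases with
  | last =>
    induction j using Fin.lastCases with
    | last => rfl
    | cast j =>
      simp only [Fin.snoc_last, Fin.snoc_castSucc] at h
      exact absurd ⟨j, h.symm⟩ ha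
  | cast i =>
    induction j using Fin.lastCases with
    | last =>
      simp only [Fin.snoc_last, Fin.snoc_castSucc] at h
      exact absurd ⟨i, h⟩ ha
    | cast j =>
      simp only [Fin.snoc_castSucc] at h
      exact congrArg Fin.castSucc (hf h)

open Matrix in
/-- McCoy's theorem direction: if `M *ᵥ ·` is injective, then `det M` is not a zero divisor. -/
lemma mccoy_det_regular {R : Type*} [CommRing R] {n : ℕ} (M : Matrix (Fin n) (Fin n) R)
    (hinj : Function.Injective M.mulVec) : ∀ b : R, M.det * b = 0 → b = 0 := by
  intro b hdet
  by_contra hb0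
  classical
  -- `P t` : `b` annihilates all `t × t` minors of `M`.
  set P : ℕ → Prop := fun t => ∀ (f g : Fin t ↪ Fin n), b * (M.submatrix f g).det = 0 with hP
  have hPn : P n := by
    intro f g
    have hf : Function.Bijective f :=
      (Fintype.bijective_iff_injective_and_card f).2 ⟨f.injective, rfl⟩
    have hg : Function.Bijective g :=
      (Fintype.bijective_iff_injective_and_card g).2 ⟨g.injective, rfl⟩
    set e₁ := Equiv.ofBijective f hf with he₁
    set e₂ := Equiv.ofBijective g hg with he₂
    have hsub : M.submatrix f g = (M.submatrix e₂ e₂).submatrix (e₁.trans e₂.symm) id := by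
      ext i j
      simp [he₁, he₂, Matrix.submatrix_apply, Equiv.ofBijective_apply, Equiv.ofBijective_apply_symm_apply]
    rw [hsub, Matrix.det_permute, Matrix.det_submatrix_equiv_self]
    rcases Int.units_eq_one_or (Equiv.Perm.sign (e₁.trans e₂.symm)) with h | h <;>
      rw [h] <;> simp [mul_comm b, hdet, mul_assoc]
  have hex : ∃ t, P t := ⟨n, hPn⟩
  set t₀ := Nat.find hex with ht₀
  have hPt₀ : P t₀ := Nat.find_spec hex
  have ht₀n : t₀ ≤ n := Nat.find_min' hex hPn
  have ht₀0 : t₀ ≠ 0 := by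
    intro h
    apply hb0
    have h0 : P 0 := h ▸ hPt₀
    simpa using h0 ⟨Fin.elim0, fun x => x.elim0⟩ ⟨Fin.elim0, fun x => x.elim0⟩
  obtain ⟨r, hr⟩ : ∃ r, t₀ = r + 1 := ⟨t₀ - 1, (Nat.succ_pred_eq_of_ne_zero ht₀0).symm⟩
  have hPr : ¬ P r := Nat.find_min hex (by omega)
  simp only [hP] at hPr
  push_neg at hPr
  obtain ⟨f, g, hfg⟩ := hPr
  have hrn : r + 1 ≤ n := by omega
  -- extend `g` by a fresh column index `k`
  obtain ⟨k, hk⟩ : ∃ k, k ∉ Set.range g := by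
    by_contra h
    push_neg at h
    have : Function.Surjective g := fun k => h k
    have := Fintype.card_le_of_surjective g this
    simp at this; omega
  have hg'inj : Function.Injective (Fin.snoc (⇑g) k : Fin (r + 1) → Fin n) :=
    snoc_injective_of_not_mem_range g.injective hk
  set g' : Fin (r + 1) ↪ Fin n := ⟨(Fin.snoc (⇑g) k : Fin (r + 1) → Fin n), hg'inj⟩ with hg'
  -- the candidate kernel vector
  set c : Fin (r + 1) → R :=
    fun j => (-1 : R) ^ ((r : ℕ) + (j : ℕ)) * (M.submatrix ⇑f (⇑g' ∘ j.succAbove)).det with hc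
  set x : Fin n → R := ∑ j : Fin (r + 1), (b * c j) • (Pi.single (g' j) (1 : R) : Fin n → R) with hx
  -- `x` is nonzero
  have hxlast : x (g' (Fin.last r)) = b * (M.submatrix f g).det := by
    rw [hx]
    simp only [Finset.sum_apply, Pi.smul_apply, smul_eq_mul]
    rw [Finset.sum_eq_single (Fin.last r)]
    · have h1 : (⇑g' ∘ (Fin.last r).succAbove) = ⇑g := by
        ext j
        simp [hg', Fin.succAbove_last]
      have h2 : c (Fin.last r) = (M.submatrix f g).det := by
        rw [hc]
        simp only [h1, Fin.val_last]
        rw [show (-1 : R) ^ (r + r) = 1 from Even.neg_one_pow ⟨r, rfl⟩, one_mul]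
      rw [Pi.single_eq_same, mul_one, h2]
    · intro j _ hj
      have hne : g' (Fin.last r) ≠ g' j := fun h => hj (g'.injective h).symm
      rw [Pi.single_eq_of_ne hne, mul_zero]
    · intro h
      exact absurd (Finset.mem_univ _) h
  have hxne : x ≠ 0 := by
    intro h
    rw [h] at hxlast
    exact hfg hxlast.symm
  -- `M *ᵥ x = 0`
  have hMx : M.mulVec x = 0 := by
    ext i
    have expand : ∀ v : Fin n,
        M.mulVec x v = b * ∑ j : Fin (r + 1), (-1 : R) ^ ((r : ℕ) + (j : ℕ)) *
          M v (g' j) * (M.submatrix ⇑f (⇑g' ∘ j.succAbove)).det := by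
      intro v
      rw [hx]
      rw [show M.mulVec (∑ j : Fin (r + 1), (b * c j) • (Pi.single (g' j) (1 : R) : Fin n → R)) =
          ∑ j : Fin (r + 1), (b * c j) • M.mulVec ((Pi.single (g' j) (1 : R) : Fin n → R)) by
        rw [← Matrix.mulVecLin_apply, map_sum]
        simp [Matrix.mulVecLin_apply, Matrix.mulVec_smul]]
      simp only [Finset.sum_apply, Pi.smul_apply, Matrix.mulVec_single_one, Matrix.col_apply, smul_eq_mul,
        Matrix.transpose_apply, hc, Finset.mul_sum]
      refine Finset.sum_congr rfl fun j _ => by ring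
    -- the sum is the Laplace expansion of an `(r+1)`-minor along its last row
    have key : ∑ j : Fin (r + 1), (-1 : R) ^ ((r : ℕ) + (j : ℕ)) *
        M i (g' j) * (M.submatrix ⇑f (⇑g' ∘ j.succAbove)).det =
        (M.submatrix ((Fin.snoc (⇑f) i : Fin (r + 1) → Fin n)) ⇑g').det := by
      rw [Matrix.det_succ_row _ (Fin.last r)]
      refine Finset.sum_congr rfl fun j _ => ?_
      have h1 : (M.submatrix (Fin.snoc (⇑f) i : Fin (r + 1) → Fin n) ⇑g') (Fin.last r) j
          = M i (g' j) := by
        simp [Matrix.submatrix_apply]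
      have h2 : (M.submatrix (Fin.snoc (⇑f) i : Fin (r + 1) → Fin n) ⇑g').submatrix
            (Fin.last r).succAbove j.succAbove
          = M.submatrix ⇑f (⇑g' ∘ j.succAbove) := by
        ext a b'
        simp [Matrix.submatrix_apply, Fin.succAbove_last]
      rw [h1, h2]
      simp [Fin.val_last]
    rw [expand i, key, Pi.zero_apply]
    by_cases hi : i ∈ Set.range f
    · obtain ⟨a, rfl⟩ := hi
      have : (M.submatrix ((Fin.snoc (⇑f) (f a) : Fin (r + 1) → Fin n)) ⇑g').det = 0 := by
        apply Matrix.det_zero_of_row_eq (i := Fin.castSucc a) (j := Fin.last r)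
        · exact Fin.ne_of_lt (Fin.castSucc_lt_last a)
        · ext b'
          simp [Matrix.submatrix_apply]
      rw [this, mul_zero]
    · have hinj' : Function.Injective ((Fin.snoc (⇑f) i : Fin (r + 1) → Fin n)) :=
        snoc_injective_of_not_mem_range f.injective hi
      have hP1 : P (r + 1) := hr ▸ hPt₀
      exact hP1 ⟨(Fin.snoc (⇑f) i : Fin (r + 1) → Fin n), hinj'⟩ g'
  -- contradiction with injectivity
  have : x = 0 := by
    apply hinj
    rw [hMx, Matrix.mulVec_zero]
  exact hxne this

/-- An injective `R`-module endomorphism of `Rⁿ` over a commutative ring `R` has a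
determinant which is not a zero divisor. -/
theorem det_not_zero_divisor_of_injective
    {R : Type*} [CommRing R] {n : ℕ}
    (ρ : (Fin n → R) →ₗ[R] (Fin n → R)) (hρ : Function.Injective ρ) :
    ∀ b : R, LinearMap.det ρ * b = 0 → b = 0 := by
  intro b hb
  refine mccoy_det_regular (LinearMap.toMatrix' ρ) ?_ b ?_
  · intro u v huv
    apply hρ
    rw [← Matrix.toLin'_apply, ← Matrix.toLin'_apply, Matrix.toLin'_toMatrix'] at huv
    exact huv
  · simp only [LinearMap.det_toMatrix']
    exact hb
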